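/- Suppose G = H ⊕ K where Hom(H,K) = 0 (so H is fully invariant in G). Then G is strongly Hopfian if and only if both H and K are strongly Hopfian. -/

import Mathlib

/-- An abelian group is strongly Hopfian if for every endomorphism `φ`,
the ascending chain `ker φ ≤ ker φ² ≤ …` is eventually stationary. -/
def StronglyHopfian (G : Type*) [AddCommGroup G] : Prop :=
  ∀ φ : AddMonoid.End G, ∃ n : ℕ, ∀ m : ℕ, n ≤ m →
    AddMonoidHom.ker (φ ^ m : G →+ G) = AddMonoidHom.ker (φ ^ n : G →+ G)

private lemma pow_zero_mono {G : Type*} [AddCommGroup G] (ψ : AddMonoid.End G)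
    {n m : ℕ} (h : n ≤ m) {x : G} (hx : (ψ ^ n : G →+ G) x = 0) :
    (ψ ^ m : G →+ G) x = 0 := by
  obtain ⟨c, rfl⟩ := Nat.exists_eq_add_of_le h
  rw [add_comm, pow_add]
  show (ψ ^ c : G →+ G) ((ψ ^ n : G →+ G) x) = 0
  rw [hx, map_zero]

theorem stmt10 {H K : Type*} [AddCommGroup H] [AddCommGroup K]
    (hhom : ∀ f : H →+ K, f = 0) :
    StronglyHopfian (H × K) ↔ StronglyHopfian H ∧ StronglyHopfian K := by
  constructor
  · intro hG
    constructor
    · intro φ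
      set Φ : AddMonoid.End (H × K) :=
        AddMonoidHom.prodMap (φ : H →+ H) (AddMonoidHom.id K) with hΦ
      have powΦ : ∀ (m : ℕ) (x : H × K), (Φ ^ m : H × K →+ H × K) x
          = ((φ ^ m : H →+ H) x.1, x.2) := by
        intro m
        induction m with
        | zero => intro x; simp
        | succ m ih =>
          intro x
          rw [pow_succ, pow_succ]
          show (Φ ^ m : H × K →+ H × K) (Φ x) = ((φ ^ m : H →+ H) (φ x.1), x.2)
          rw [ih (Φ x)]
          rfl
      obtain ⟨n, hn⟩ := hG Φ
      refine ⟨n, fun m hm => ?_⟩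
      ext h
      have := SetLike.ext_iff.mp (hn m hm) (h, 0)
      change (Φ ^ m : H × K →+ H × K) (h, 0) = 0 ↔ (Φ ^ n : H × K →+ H × K) (h, 0) = 0 at this
      show (φ ^ m : H →+ H) h = 0 ↔ (φ ^ n : H →+ H) h = 0
      simp only [powΦ, Prod.ext_iff] at this
      simpa using this
    · intro φ
      set Φ : AddMonoid.End (H × K) :=
        AddMonoidHom.prodMap (AddMonoidHom.id H) (φ : K →+ K) with hΦ
      have powΦ : ∀ (m : ℕ) (x : H × K), (Φ ^ m : H × K →+ H × K) x
          = (x.1, (φ ^ m : K →+ K) x.2) := by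
        intro m
        induction m with
        | zero => intro x; simp
        | succ m ih =>
          intro x
          rw [pow_succ, pow_succ]
          show (Φ ^ m : H × K →+ H × K) (Φ x) = (x.1, (φ ^ m : K →+ K) (φ x.2))
          rw [ih (Φ x)]
          rfl
      obtain ⟨n, hn⟩ := hG Φ
      refine ⟨n, fun m hm => ?_⟩
      ext k
      have := SetLike.ext_iff.mp (hn m hm) (0, k)
      change (Φ ^ m : H × K →+ H × K) (0, k) = 0 ↔ (Φ ^ n : H × K →+ H × K) (0, k) = 0 at this
      show (φ ^ m : K →+ K) k = 0 ↔ (φ ^ n : K →+ K) k = 0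
      simp only [powΦ, Prod.ext_iff] at this
      simpa using this
  · rintro ⟨hH, hK⟩ φ
    set α : AddMonoid.End H :=
      (AddMonoidHom.fst H K).comp ((φ : H × K →+ H × K).comp (AddMonoidHom.inl H K)) with hα
    set δ : AddMonoid.End K :=
      (AddMonoidHom.snd H K).comp ((φ : H × K →+ H × K).comp (AddMonoidHom.inr H K)) with hδ
    have hz : ∀ h : H, (φ (h, 0)).2 = 0 := by
      intro h
      have := hhom ((AddMonoidHom.snd H K).comp
        ((φ : H × K →+ H × K).comp (AddMonoidHom.inl H K)))
      exact DFunLike.congr_fun this h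
    have key1 : ∀ h : H, φ (h, 0) = (α h, 0) := by
      intro h
      exact Prod.ext rfl (hz h)
    have key2 : ∀ x : H × K, (φ x).2 = δ x.2 := by
      intro x
      have h0 : (φ x).2 = (φ (x.1, 0)).2 + (φ (0, x.2)).2 := by
        rw [← Prod.snd_add, ← map_add]
        congr 1
        simp
      rw [h0, hz x.1, zero_add]
      rfl
    have pow1 : ∀ (m : ℕ) (h : H), (φ ^ m : H × K →+ H × K) (h, 0)
        = ((α ^ m : H →+ H) h, 0) := by
      intro m
      induction m with
      | zero => intro h; simp
      | succ m ih =>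
        intro h
        rw [pow_succ, pow_succ]
        show (φ ^ m : H × K →+ H × K) (φ (h, 0)) = ((α ^ m : H →+ H) (α h), 0)
        rw [key1 h, ih (α h)]
    have pow2 : ∀ (m : ℕ) (x : H × K), ((φ ^ m : H × K →+ H × K) x).2
        = (δ ^ m : K →+ K) x.2 := by
      intro m
      induction m with
      | zero => intro x; simp
      | succ m ih =>
        intro x
        rw [pow_succ, pow_succ]
        show ((φ ^ m : H × K →+ H × K) (φ x)).2 = (δ ^ m : K →+ K) (δ x.2)
        rw [ih (φ x), key2 x]
    obtain ⟨n₁, h1⟩ := hH α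
    obtain ⟨n₂, h2⟩ := hK δ
    refine ⟨n₁ + n₂, fun m hm => ?_⟩
    ext x
    show (φ ^ m : H × K →+ H × K) x = 0 ↔ (φ ^ (n₁ + n₂) : H × K →+ H × K) x = 0
    constructor
    · intro hx
      -- x.2 is killed by δ^{n₂}
      have hd : (δ ^ m : K →+ K) x.2 = 0 := by rw [← pow2 m x, hx]; rfl
      have hn₂m : n₂ ≤ m := le_trans (Nat.le_add_left _ _) hm
      have hd2 : (δ ^ n₂ : K →+ K) x.2 = 0 := by
        have := SetLike.ext_iff.mp (h2 m hn₂m) x.2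
        change (δ ^ m : K →+ K) x.2 = 0 ↔ (δ ^ n₂ : K →+ K) x.2 = 0 at this
        exact this.mp hd
      set y := (φ ^ n₂ : H × K →+ H × K) x with hy
      have hy2 : y.2 = 0 := by rw [hy, pow2 n₂ x, hd2]
      have hyform : y = (y.1, 0) := Prod.ext rfl hy2
      have hmy : (φ ^ (m - n₂) : H × K →+ H × K) y = 0 := by
        rw [hy]
        have : (φ ^ (m - n₂) : H × K →+ H × K) ((φ ^ n₂ : H × K →+ H × K) x)
            = (φ ^ m : H × K →+ H × K) x := by
          conv_rhs => rw [show m = (m - n₂) + n₂ from (Nat.sub_add_cancel hn₂m).symm,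
            pow_add]
          rfl
        rw [this, hx]
      have hα1 : (α ^ (m - n₂) : H →+ H) y.1 = 0 := by
        have := pow1 (m - n₂) y.1
        rw [← hyform] at this
        rw [hmy] at this
        exact (Prod.ext_iff.mp this.symm).1
      have hn₁m : n₁ ≤ m - n₂ := Nat.le_sub_of_add_le hm
      have hα2 : (α ^ n₁ : H →+ H) y.1 = 0 := by
        have := SetLike.ext_iff.mp (h1 (m - n₂) hn₁m) y.1
        change (α ^ (m - n₂) : H →+ H) y.1 = 0 ↔ (α ^ n₁ : H →+ H) y.1 = 0 at this
        exact this.mp hα1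
      have : (φ ^ n₁ : H × K →+ H × K) y = 0 := by
        rw [hyform, pow1 n₁ y.1, hα2]
        rfl
      calc (φ ^ (n₁ + n₂) : H × K →+ H × K) x
          = (φ ^ n₁ : H × K →+ H × K) ((φ ^ n₂ : H × K →+ H × K) x) := by
            rw [pow_add]; rfl
        _ = 0 := by rw [← hy, this]
    · intro hx
      exact pow_zero_mono φ hm hx
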